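/- Let d ≥ 2 and let (s_i, t_i)_{i=1}^{d−1} encode a generic degree-d primitive major. For each i let ℓ_i ⊆ ℂ be the closed straight line segment joining e^{2πi s_i} and e^{2πi t_i}, and let D be the open unit disk in ℂ. Then D ∖ ⋃_{i=1}^{d−1} ℓ_i has exactly d connected components, and for each such component C, the Lebesgue measure of the set {α ∈ ℝ/ℤ : e^{2πiα} ∈ closure(C)} equals 1/d. -/

import Mathlib

open Set MeasureTheory

/-- The circle `ℝ/ℤ`. -/
abbrev 𝕊 := AddCircle (1 : ℝ)

/-- A generic degree-`d` primitive major, encoded by the starting points `s i` and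
terminal points `t i` of its `d - 1` leaves: all `2(d-1)` endpoints are pairwise
distinct, `0 ≤ s i < t i < 1`, each `d • (t i - s i)` is an integer, and any two leaves
are unlinked. -/
def IsGenericMajor (d : ℕ) (s t : Fin (d - 1) → ℝ) : Prop :=
  (∀ i, 0 ≤ s i ∧ s i < t i ∧ t i < 1) ∧
  Function.Injective (Sum.elim s t) ∧
  (∀ i, ∃ k : ℤ, (d : ℝ) * (t i - s i) = (k : ℝ)) ∧
  ∀ i j, i ≠ j →
    ((s j ∈ Ioo (s i) (t i) ∧ t j ∈ Ioo (s i) (t i)) ∨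
     (s j ∉ Icc (s i) (t i) ∧ t j ∉ Icc (s i) (t i)))

/-- The point `e^{2πiα}` of the unit circle in `ℂ` attached to `α ∈ ℝ/ℤ`. -/
noncomputable def circleExp (α : 𝕊) : ℂ := (AddCircle.toCircle α : ℂ)

open Real

noncomputable def ee (β : ℝ) : ℂ := Complex.exp ((2 * π * β : ℝ) * Complex.I)

noncomputable def lf (p q z : ℂ) : ℝ := ((z - p) * (starRingEnd ℂ) (q - p)).im

lemma ee_norm (β : ℝ) : ‖ee β‖ = 1 := Complex.norm_exp_ofReal_mul_I _

lemma lf_affine (p q a b : ℂ) (u : ℝ) :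
    lf p q ((1-u) • a + u • b) = (1-u) * lf p q a + u * lf p q b := by
  simp only [lf, Complex.real_smul, Complex.mul_im, Complex.sub_re, Complex.sub_im,
    Complex.add_re, Complex.add_im, Complex.mul_re, Complex.ofReal_re, Complex.ofReal_im,
    Complex.conj_re, Complex.conj_im]
  ring

lemma trig2 (x z : ℝ) : sin (2*(x+z)) - sin (2*x) - sin (2*z)
    = -(4 * sin z * sin x * sin (x+z)) := by
  simp only [two_mul, sin_add, cos_add]
  linear_combination (2*sin x*cos x)*(sin_sq_add_cos_sq z) + (2*sin z*cos z)*(sin_sq_add_cos_sq x)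

lemma lf_ee (s t β : ℝ) : lf (ee s) (ee t) (ee β) =
    4 * sin (π*(t-s)) * sin (π*(β-s)) * sin (π*(β-t)) := by
  have h : ∀ x : ℝ, ee x = Complex.exp ((2*π*x : ℝ) * Complex.I) := fun _ => rfl
  have him : ∀ x : ℝ, (ee x).im = sin (2*π*x) := by
    intro x; rw [h]; exact Complex.exp_ofReal_mul_I_im _
  have hre : ∀ x : ℝ, (ee x).re = cos (2*π*x) := by
    intro x; rw [h]; exact Complex.exp_ofReal_mul_I_re _
  have lhs : lf (ee s) (ee t) (ee β) =
      (sin (2*π*β) - sin (2*π*s)) * (cos (2*π*t) - cos (2*π*s))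
      - (cos (2*π*β) - cos (2*π*s)) * (sin (2*π*t) - sin (2*π*s)) := by
    simp only [lf, Complex.mul_im, Complex.sub_re, Complex.sub_im, Complex.conj_re,
      Complex.conj_im, him, hre]
    ring
  have key := trig2 (π*(β-s)) (π*(s-t))
  have e1 : 2*(π*(β-s) + π*(s-t)) = 2*π*β - 2*π*t := by ring
  have e2 : (2:ℝ)*(π*(β-s)) = 2*π*β - 2*π*s := by ring
  have e3 : (2:ℝ)*(π*(s-t)) = 2*π*s - 2*π*t := by ring
  rw [e1, e2, e3] at key
  have s1 : sin (2*π*β - 2*π*t) = sin (2*π*β) * cos (2*π*t) - cos (2*π*β) * sin (2*π*t) :=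
    sin_sub _ _
  have s2 : sin (2*π*β - 2*π*s) = sin (2*π*β) * cos (2*π*s) - cos (2*π*β) * sin (2*π*s) :=
    sin_sub _ _
  have s3 : sin (2*π*s - 2*π*t) = sin (2*π*s) * cos (2*π*t) - cos (2*π*s) * sin (2*π*t) :=
    sin_sub _ _
  rw [s1, s2, s3] at key
  have r1 : π*(t-s) = -(π*(s-t)) := by ring
  have r2 : π*(β-t) = π*(β-s) + π*(s-t) := by ring
  rw [lhs, r1, r2, sin_neg]
  linear_combination key

lemma sin_pi_pos {x : ℝ} (h0 : 0 < x) (h1 : x < 1) : 0 < sin (π * x) :=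
  sin_pos_of_pos_of_lt_pi (by positivity) (by nlinarith [pi_pos])

lemma sin_pi_neg {x : ℝ} (h0 : -1 < x) (h1 : x < 0) : sin (π * x) < 0 := by
  have : 0 < sin (π * (-x)) := sin_pi_pos (by linarith) (by linarith)
  have e : π * (-x) = -(π * x) := by ring
  rw [e, sin_neg] at this; linarith

section signs
variable {s t β : ℝ} (hs : 0 ≤ s) (hst : s < t) (ht : t < 1)

include hs hst ht

lemma lf_neg_of_mem (h : β ∈ Ioo s t) : lf (ee s) (ee t) (ee β) < 0 := by
  obtain ⟨hb1, hb2⟩ := h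
  rw [lf_ee]
  have h1 : 0 < sin (π*(t-s)) := sin_pi_pos (by linarith) (by linarith)
  have h2 : 0 < sin (π*(β-s)) := sin_pi_pos (by linarith) (by linarith)
  have h3 : sin (π*(β-t)) < 0 := sin_pi_neg (by linarith) (by linarith)
  have := mul_neg_of_pos_of_neg (mul_pos (mul_pos (by norm_num : (0:ℝ) < 4) h1) h2) h3
  linarith

lemma lf_pos_of_notmem (hβ : β ∈ Ioo (0:ℝ) 1) (h : β < s ∨ t < β) :
    0 < lf (ee s) (ee t) (ee β) := by
  obtain ⟨hb1, hb2⟩ := hβ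
  rw [lf_ee]
  have h1 : 0 < sin (π*(t-s)) := sin_pi_pos (by linarith) (by linarith)
  rcases h with h | h
  · have h2 : sin (π*(β-s)) < 0 := sin_pi_neg (by linarith) (by linarith)
    have h3 : sin (π*(β-t)) < 0 := sin_pi_neg (by linarith) (by linarith)
    have := mul_pos_of_neg_of_neg (mul_neg_of_pos_of_neg (mul_pos (by norm_num : (0:ℝ) < 4) h1) h2) h3
    nlinarith [mul_pos (mul_pos (by norm_num : (0:ℝ) < 4) h1) (mul_pos_of_neg_of_neg h2 h3)]
  · have h2 : 0 < sin (π*(β-s)) := sin_pi_pos (by linarith) (by linarith)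
    have h3 : 0 < sin (π*(β-t)) := sin_pi_pos (by linarith) (by linarith)
    have := mul_pos (mul_pos (mul_pos (by norm_num : (0:ℝ) < 4) h1) h2) h3
    linarith

lemma lf_neg_iff (hβ : β ∈ Ioo (0:ℝ) 1) :
    lf (ee s) (ee t) (ee β) < 0 ↔ β ∈ Ioo s t := by
  constructor
  · intro h
    by_contra hmem
    simp only [mem_Ioo, not_and_or, not_lt] at hmem
    rcases hmem with h' | h'
    · rcases eq_or_lt_of_le h' with rfl | h''
      · rw [lf_ee] at h; simp at h
      · exact absurd h (not_lt.2 (le_of_lt (lf_pos_of_notmem hs hst ht hβ (Or.inl h''))))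
    · rcases eq_or_lt_of_le h' with h'' | h''
      · rw [← h'', lf_ee] at h; simp at h
      · exact absurd h (not_lt.2 (le_of_lt (lf_pos_of_notmem hs hst ht hβ (Or.inr h''))))
  · exact lf_neg_of_mem hs hst ht

lemma lf_pos_iff (hβ : β ∈ Ioo (0:ℝ) 1) (h1 : β ≠ s) (h2 : β ≠ t) :
    0 < lf (ee s) (ee t) (ee β) ↔ β ∉ Ioo s t := by
  constructor
  · intro h hmem
    exact absurd (lf_neg_of_mem hs hst ht hmem) (not_lt.2 (le_of_lt h))
  · intro hmem
    simp only [mem_Ioo, not_and_or, not_lt] at hmem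
    apply lf_pos_of_notmem hs hst ht hβ
    rcases hmem with h' | h'
    · exact Or.inl (lt_of_le_of_ne h' h1)
    · exact Or.inr (lt_of_le_of_ne h' (Ne.symm h2))

lemma lf_ne_of_ne (hβ : β ∈ Ioo (0:ℝ) 1) (h1 : β ≠ s) (h2 : β ≠ t) :
    lf (ee s) (ee t) (ee β) ≠ 0 := by
  by_cases hm : β ∈ Ioo s t
  · exact ne_of_lt (lf_neg_of_mem hs hst ht hm)
  · exact ne_of_gt ((lf_pos_iff hs hst ht hβ h1 h2).2 hm)

lemma lf_nonneg_at_zero : 0 ≤ lf (ee s) (ee t) (ee 0) := by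
  rw [lf_ee]
  have h1 : 0 < sin (π*(t-s)) := sin_pi_pos (by linarith) (by linarith)
  have h2 : sin (π*(0-s)) ≤ 0 := by
    rcases eq_or_lt_of_le hs with rfl | h
    · simp
    · exact le_of_lt (sin_pi_neg (by linarith) (by linarith))
  have h3 : sin (π*(0-t)) < 0 := sin_pi_neg (by linarith) (by linarith)
  have h23 : 0 ≤ (-(sin (π*(0-s)))) * (-(sin (π*(0-t)))) := mul_nonneg (by linarith) (by linarith)
  nlinarith [mul_nonneg (mul_pos (by norm_num : (0:ℝ) < 4) h1).le h23]

end signs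

-- normSq of affine combination
lemma normSq_combo (p q : ℂ) (u : ℝ) :
    Complex.normSq ((1-u) • p + u • q) =
      (1-u) * Complex.normSq p + u * Complex.normSq q - u*(1-u) * Complex.normSq (p - q) := by
  simp only [Complex.normSq_apply, Complex.add_re, Complex.add_im, Complex.smul_re,
    Complex.smul_im, Complex.sub_re, Complex.sub_im, smul_eq_mul]
  ring

lemma lf_self (p q : ℂ) : lf p q p = 0 := by simp [lf]

lemma lf_other (p q : ℂ) : lf p q q = 0 := by
  simp only [lf, Complex.mul_im, Complex.sub_re, Complex.sub_im, Complex.conj_re,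
    Complex.conj_im]
  ring

lemma lf_affine' (p q a b : ℂ) (u : ℝ) :
    lf p q ((1-u) • a + u • b) = (1-u) * lf p q a + u * lf p q b := by
  simp only [lf, Complex.real_smul, Complex.mul_im, Complex.sub_re, Complex.sub_im,
    Complex.add_re, Complex.add_im, Complex.mul_re, Complex.ofReal_re, Complex.ofReal_im,
    Complex.conj_re, Complex.conj_im]
  ring

lemma lf_add_smul (p q z : ℂ) (u : ℝ) : lf p q (z + u • (q - p)) = lf p q z := by
  simp only [lf, Complex.real_smul, Complex.mul_im, Complex.sub_re, Complex.sub_im,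
    Complex.add_re, Complex.add_im, Complex.mul_re, Complex.ofReal_re, Complex.ofReal_im,
    Complex.conj_re, Complex.conj_im]
  ring

lemma lf_zero_iff_segment {p q z : ℂ} (hp : ‖p‖ = 1) (hq : ‖q‖ = 1)
    (hpq : p ≠ q) (hz : ‖z‖ < 1) : lf p q z = 0 ↔ z ∈ segment ℝ p q := by
  constructor
  · intro h
    have hvne : q - p ≠ 0 := sub_ne_zero.2 (Ne.symm hpq)
    have hA : 0 < Complex.normSq (q - p) := Complex.normSq_pos.2 hvne
    set r : ℝ := ((z - p) * (starRingEnd ℂ) (q - p)).re with hr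
    set u : ℝ := r / Complex.normSq (q - p) with hu
    have key : (z - p) * (starRingEnd ℂ) (q - p) = (r : ℂ) := by
      apply Complex.ext
      · simp [hr]
      · simpa [lf] using h
    have hvmul : (starRingEnd ℂ) (q - p) * (q - p) = (Complex.normSq (q - p) : ℂ) := by
      rw [mul_comm]; exact Complex.mul_conj (q - p)
    have hns : (Complex.normSq (q - p) : ℂ) ≠ 0 := by
      simpa using ne_of_gt hA
    have h2 : (z - p) * (Complex.normSq (q - p) : ℂ) = (r : ℂ) * (q - p) := by
      rw [← hvmul, ← mul_assoc, key]
    have hw : z - p = (u : ℂ) * (q - p) := by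
      rw [hu, Complex.ofReal_div, div_mul_eq_mul_div, eq_div_iff hns]
      linear_combination h2
    have hzeq : z = (1-u) • p + u • q := by
      have hz2 : z = p + (u:ℂ) * (q - p) := by rw [← hw]; ring
      rw [hz2]
      simp only [Complex.real_smul, Complex.ofReal_sub, Complex.ofReal_one]
      ring
    have hnsz : Complex.normSq z < 1 := by
      have := Complex.sq_norm z
      nlinarith [norm_nonneg z]
    have hcombo := normSq_combo p q u
    rw [← hzeq] at hcombo
    have hnp : Complex.normSq p = 1 := by
      have := Complex.sq_norm p; rw [hp] at this; linarith
    have hnq : Complex.normSq q = 1 := by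
      have := Complex.sq_norm q; rw [hq] at this; linarith
    have hpqpos : 0 < Complex.normSq (p - q) := Complex.normSq_pos.2 (sub_ne_zero.2 hpq)
    have h3 : 0 < u * (1-u) * Complex.normSq (p - q) := by rw [hnp, hnq] at hcombo; linarith
    have huu : 0 < u * (1 - u) := by
      by_contra hle
      push_neg at hle
      nlinarith [mul_nonneg (neg_nonneg.2 hle) hpqpos.le]
    have hu0 : 0 < u := by nlinarith
    have hu1 : u < 1 := by nlinarith
    exact ⟨1-u, u, by linarith, by linarith, by ring, hzeq.symm⟩
  · rintro ⟨a, b, ha, hb, hab, rfl⟩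
    have : a = 1 - b := by linarith
    subst this
    have := lf_affine' p q p q b
    rw [lf_self, lf_other] at this
    simpa using this

lemma ee_add_int (x : ℝ) (n : ℤ) : ee (x + n) = ee x := by
  unfold ee
  rw [show ((2 * π * (x + n) : ℝ) : ℂ) * Complex.I
      = ((2 * π * x : ℝ) : ℂ) * Complex.I + n * (2 * π * Complex.I) by
    push_cast; ring]
  rw [Complex.exp_add, Complex.exp_int_mul_two_pi_mul_I, mul_one]

lemma exists_ee {a : ℂ} (ha : ‖a‖ = 1) : ∃ β ∈ Ico (0:ℝ) 1, a = ee β := by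
  have h1 : a = Complex.exp (Complex.arg a * Complex.I) := by
    conv_lhs => rw [← Complex.norm_mul_exp_arg_mul_I a]
    rw [ha, Complex.ofReal_one, one_mul]
  set β₀ : ℝ := Complex.arg a / (2 * π) with hβ₀
  have hpi : (2 * π : ℝ) ≠ 0 := by positivity
  have h2 : ee β₀ = a := by
    unfold ee
    rw [h1, hβ₀]
    have heq : 2 * π * (Complex.arg a / (2 * π)) = Complex.arg a := by field_simp
    rw [heq]
  refine ⟨Int.fract β₀, ⟨Int.fract_nonneg _, Int.fract_lt_one _⟩, ?_⟩
  rw [← h2]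
  conv_lhs => rw [← Int.fract_add_floor β₀]
  rw [ee_add_int]

lemma ee_ne {s t : ℝ} (hne : s ≠ t) (habs : |s - t| < 1) : ee s ≠ ee t := by
  intro h
  unfold ee at h
  rw [Complex.exp_eq_exp_iff_exists_int] at h
  obtain ⟨n, hn⟩ := h
  have hn' : ((2*π*s : ℝ) : ℂ) * Complex.I = ((2*π*t + n*(2*π) : ℝ) : ℂ) * Complex.I := by
    rw [hn]; push_cast; ring
  have hre := mul_right_cancel₀ Complex.I_ne_zero hn'
  have hreal : 2*π*s = 2*π*t + n*(2*π) := Complex.ofReal_inj.1 hre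
  have h2π : (2*π : ℝ) ≠ 0 := by positivity
  have hreal' : (2*π) * s = (2*π) * (t + n) := by linarith
  have hst : s = t + n := mul_left_cancel₀ h2π hreal'
  rw [hst] at hne habs
  simp only [add_sub_cancel_left] at habs
  rw [abs_lt] at habs
  have hn0 : n = 0 := by
    have h1 : (-1 : ℤ) < n := by exact_mod_cast habs.1
    have h2 : (n : ℤ) < 1 := by exact_mod_cast habs.2
    omega
  simp [hn0] at hne

lemma normSq_add_smul (z v : ℂ) (w : ℝ) :
    Complex.normSq (z + w • v) =
      Complex.normSq z + 2 * w * (z * (starRingEnd ℂ) v).re + w^2 * Complex.normSq v := by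
  simp only [Complex.normSq_apply, Complex.add_re, Complex.add_im, Complex.smul_re,
    Complex.smul_im, Complex.mul_re, Complex.conj_re, Complex.conj_im, smul_eq_mul]
  ring

-- the chord through an interior point, in the "inner" (negative) region
lemma exists_chord {s t : ℝ} (hs : 0 ≤ s) (hst : s < t) (ht : t < 1) {z : ℂ}
    (hz : ‖z‖ < 1) (hneg : lf (ee s) (ee t) z < 0) :
    ∃ β₁ ∈ Ioo s t, ∃ β₂ ∈ Ioo s t, ∃ u : ℝ, u ∈ Icc (0:ℝ) 1 ∧
      z = (1-u) • ee β₁ + u • ee β₂ := by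
  set p := ee s
  set q := ee t
  set v := q - p with hv
  have hpq : p ≠ q := ee_ne (ne_of_lt hst) (by rw [abs_lt]; constructor <;> linarith)
  have hvne : v ≠ 0 := sub_ne_zero.2 (Ne.symm hpq)
  set A := Complex.normSq v with hA'
  have hA : 0 < A := Complex.normSq_pos.2 hvne
  set B := (z * (starRingEnd ℂ) v).re with hB'
  have hnsz : Complex.normSq z < 1 := by
    have := Complex.sq_norm z
    nlinarith [norm_nonneg z]
  set D := B^2 - A * (Complex.normSq z - 1) with hD'
  have hD : 0 < D := by nlinarith
  set S := Real.sqrt D with hS'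
  have hS2 : S^2 = D := Real.sq_sqrt hD.le
  have hSpos : 0 < S := Real.sqrt_pos.2 hD
  have hACpos : 0 < A * (1 - Complex.normSq z) := mul_pos hA (by linarith)
  have hS2B : B^2 < S^2 := by rw [hS2, hD']; nlinarith
  have hBS1 : 0 < B + S := by nlinarith
  have hBS2 : 0 < S - B := by nlinarith
  set u₁ : ℝ := (-B - S)/A with hu₁
  set u₂ : ℝ := (-B + S)/A with hu₂
  set a := z + u₁ • v with ha'
  set b := z + u₂ • v with hb'
  have hS2x : S^2 = B^2 - A*(Complex.normSq z - 1) := by rw [hS2, hD']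
  have hAne : A ≠ 0 := ne_of_gt hA
  have hna : Complex.normSq a = 1 := by
    have e1 : Complex.normSq a = Complex.normSq z + 2*u₁*B + u₁^2*A := by
      rw [ha', normSq_add_smul, ← hA', ← hB']
    rw [e1, hu₁]
    field_simp
    linear_combination hS2x
  have hnb : Complex.normSq b = 1 := by
    have e1 : Complex.normSq b = Complex.normSq z + 2*u₂*B + u₂^2*A := by
      rw [hb', normSq_add_smul, ← hA', ← hB']
    rw [e1, hu₂]
    field_simp
    linear_combination hS2x
  have haabs : ‖a‖ = 1 := by
    rw [Complex.norm_def, hna, Real.sqrt_one]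
  have hbabs : ‖b‖ = 1 := by
    rw [Complex.norm_def, hnb, Real.sqrt_one]
  have hlfa : lf p q a = lf p q z := lf_add_smul p q z u₁
  have hlfb : lf p q b = lf p q z := lf_add_smul p q z u₂
  obtain ⟨β₁, hβ₁I, hβ₁⟩ := exists_ee haabs
  obtain ⟨β₂, hβ₂I, hβ₂⟩ := exists_ee hbabs
  have hβ₁mem : β₁ ∈ Ioo s t := by
    have hlf1 : lf (ee s) (ee t) (ee β₁) < 0 := by rw [← hβ₁]; rw [hlfa]; exact hneg
    have hβ₁ne : β₁ ≠ 0 := by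
      intro h0
      rw [h0] at hlf1
      exact absurd hlf1 (not_lt.2 (lf_nonneg_at_zero hs hst ht))
    exact (lf_neg_iff hs hst ht ⟨lt_of_le_of_ne hβ₁I.1 (Ne.symm hβ₁ne), hβ₁I.2⟩).1 hlf1
  have hβ₂mem : β₂ ∈ Ioo s t := by
    have hlf2 : lf (ee s) (ee t) (ee β₂) < 0 := by rw [← hβ₂]; rw [hlfb]; exact hneg
    have hβ₂ne : β₂ ≠ 0 := by
      intro h0
      rw [h0] at hlf2
      exact absurd hlf2 (not_lt.2 (lf_nonneg_at_zero hs hst ht))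
    exact (lf_neg_iff hs hst ht ⟨lt_of_le_of_ne hβ₂I.1 (Ne.symm hβ₂ne), hβ₂I.2⟩).1 hlf2
  set u : ℝ := (B + S)/(2*S) with huu
  have hu0 : 0 < u := by positivity
  have hu1 : u < 1 := by
    rw [huu, div_lt_one (by positivity)]
    linarith
  refine ⟨β₁, hβ₁mem, β₂, hβ₂mem, u, ⟨hu0.le, hu1.le⟩, ?_⟩
  rw [← hβ₁, ← hβ₂, ha', hb']
  have hcoef : (1-u) * u₁ + u * u₂ = 0 := by
    rw [huu, hu₁, hu₂]
    field_simp
    ring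
  have : (1-u) • (z + u₁ • v) + u • (z + u₂ • v) = z + ((1-u)*u₁ + u*u₂) • v := by
    simp only [Complex.real_smul, Complex.ofReal_sub, Complex.ofReal_one, Complex.ofReal_add,
      Complex.ofReal_mul]
    ring
  rw [this, hcoef]
  simp

section Comb
variable {n : ℕ} {s t : Fin n → ℝ}

/-- interval of `j` weakly contains interval of `i` -/
def above (s t : Fin n → ℝ) (i j : Fin n) : Prop := s j ≤ s i ∧ t i ≤ t j
/-- interval of `j` strictly inside interval of `i` -/
def desc (s t : Fin n → ℝ) (i j : Fin n) : Prop := s i < s j ∧ t j < t i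

variable (hst : ∀ i, s i < t i)
  (hinj : Function.Injective (Sum.elim s t))
  (hunl : ∀ i j, i ≠ j →
    ((s j ∈ Ioo (s i) (t i) ∧ t j ∈ Ioo (s i) (t i)) ∨
     (s j ∉ Icc (s i) (t i) ∧ t j ∉ Icc (s i) (t i))))

lemma s_inj (hinj : Function.Injective (Sum.elim s t)) {i j : Fin n} (h : s i = s j) : i = j := by
  have := hinj (a₁ := Sum.inl i) (a₂ := Sum.inl j) (by simpa using h)
  simpa using this

include hunl in
lemma tri {i j : Fin n} (hij : i ≠ j) :
    desc s t i j ∨ desc s t j i ∨ (t j < s i ∨ t i < s j) := by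
  rcases hunl i j hij with ⟨h1, h2⟩ | ⟨h1, h2⟩
  · exact Or.inl ⟨h1.1, h2.2⟩
  · simp only [mem_Icc, not_and_or, not_le] at h1 h2
    rcases h1 with h1 | h1
    · rcases h2 with h2 | h2
      · exact Or.inr (Or.inr (Or.inl h2))
      · exact Or.inr (Or.inl ⟨h1, h2⟩)
    · exact Or.inr (Or.inr (Or.inr h1))

lemma above_refl (i : Fin n) : above s t i i := ⟨le_refl _, le_refl _⟩

include hinj in
lemma not_above_of_desc {i j : Fin n} (h : desc s t i j) : ¬ above s t i j := by
  rintro ⟨h1, _⟩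
  exact absurd (s_inj hinj (le_antisymm h1 h.1.le)) (by rintro rfl; exact lt_irrefl _ h.1)

include hunl in
/-- abstract realization -/
lemma realize_abstract (T : Fin n → Prop)
    (hdown : ∀ i j, T i → above s t i j → T j)
    (hnodisj : ∀ i j, T i → T j → ¬(t j < s i ∨ t i < s j)) :
    (∀ i, ¬ T i) ∨ ∃ i0, T i0 ∧ ∀ j, (T j ↔ above s t i0 j) := by
  classical
  by_cases hne : ∃ i, T i
  · right
    obtain ⟨i, hi⟩ := hne
    have hFne : (Finset.univ.filter (fun i => T i)).Nonempty :=
      ⟨i, by simp [hi]⟩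
    obtain ⟨i0, hi0F, hi0min⟩ := Finset.exists_min_image _ (fun i => t i - s i) hFne
    simp only [Finset.mem_filter, Finset.mem_univ, true_and] at hi0F
    refine ⟨i0, hi0F, fun j => ⟨fun hTj => ?_, fun hab => hdown i0 j hi0F hab⟩⟩
    by_cases hij : j = i0
    · subst hij; exact above_refl j
    · rcases tri hunl (Ne.symm hij : i0 ≠ j) with h | h | h
      · -- j strictly inside i0 : contradicts minimality
        exfalso
        have hjF : j ∈ Finset.univ.filter (fun i => T i) := by simp [hTj]
        have := hi0min j hjF
        have := h.1; have := h.2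
        linarith
      · exact ⟨h.1.le, h.2.le⟩
      · exact absurd h (hnodisj i0 j hi0F hTj)
  · left; push_neg at hne; exact hne

/-- maximal elements of a predicate -/
def Mset (s t : Fin n → ℝ) (P : Fin n → Prop) : Set (Fin n) :=
  {k | P k ∧ ∀ l, P l → ¬ desc s t l k}

lemma exists_maximal (P : Fin n → Prop) {j : Fin n} (hj : P j) :
    ∃ k ∈ Mset s t P, s k ≤ s j ∧ t j ≤ t k := by
  classical
  have hFne : (Finset.univ.filter (fun k => P k ∧ s k ≤ s j ∧ t j ≤ t k)).Nonempty :=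
    ⟨j, by simp [hj]⟩
  obtain ⟨k, hkF, hkmax⟩ := Finset.exists_max_image _ (fun k => t k - s k) hFne
  simp only [Finset.mem_filter, Finset.mem_univ, true_and] at hkF
  refine ⟨k, ⟨hkF.1, fun l hl hdesc => ?_⟩, hkF.2⟩
  have hlF : l ∈ Finset.univ.filter (fun k => P k ∧ s k ≤ s j ∧ t j ≤ t k) := by
    simp only [Finset.mem_filter, Finset.mem_univ, true_and]
    exact ⟨hl, le_trans hdesc.1.le (le_refl _) |>.trans hkF.2.1 |>.trans (le_refl _),
      hkF.2.2.trans hdesc.2.le⟩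
  have := hkmax l hlF
  have := hdesc.1; have := hdesc.2
  linarith

include hunl in
lemma maximal_disjoint' {P : Fin n → Prop} {k l : Fin n} (hk : k ∈ Mset s t P)
    (hl : l ∈ Mset s t P) (hkl : k ≠ l) : t l < s k ∨ t k < s l := by
  rcases tri hunl hkl with h | h | h
  · exact absurd h (hl.2 k hk.1)
  · exact absurd h (hk.2 l hl.1)
  · exact h

end Comb
section Cells
open Filter Topology

variable {n : ℕ} (s t : Fin n → ℝ)

noncomputable def lff (i : Fin n) : ℂ → ℝ := lf (ee (s i)) (ee (t i))

lemma lff_cont (i : Fin n) : Continuous (lff s t i) := by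
  unfold lff lf
  fun_prop

lemma ee_cont : Continuous ee := by
  unfold ee
  fun_prop

def cell (σ : Fin n → Bool) : Set ℂ :=
  {z | ‖z‖ < 1 ∧ ∀ i, if σ i = true then lff s t i z < 0 else 0 < lff s t i z}

def Kcell (σ : Fin n → Bool) : Set ℂ :=
  {z | ‖z‖ ≤ 1 ∧ ∀ i, if σ i = true then lff s t i z ≤ 0 else 0 ≤ lff s t i z}

noncomputable def sigOf (z : ℂ) : Fin n → Bool := fun i => decide (lff s t i z < 0)

noncomputable def sigG : Option (Fin n) → (Fin n) → Bool
  | none => fun _ => false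
  | some i0 => fun j => decide (s j ≤ s i0 ∧ t i0 ≤ t j)

lemma sigG_some_true_iff {n : ℕ} (s t : Fin n → ℝ) (i0 j : Fin n) :
    sigG s t (some i0) j = true ↔ above s t i0 j := by
  simp [sigG, above]

lemma cell_open (σ : Fin n → Bool) : IsOpen (cell s t σ) := by
  have : cell s t σ = {z : ℂ | ‖z‖ < 1} ∩
      ⋂ i, {z | if σ i = true then lff s t i z < 0 else 0 < lff s t i z} := by
    ext z; simp [cell, Set.mem_iInter]
  rw [this]
  refine IsOpen.inter ?_ (isOpen_iInter_of_finite fun i => ?_)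
  · exact isOpen_lt continuous_norm continuous_const
  · by_cases h : σ i = true
    · simp only [h, if_true]
      exact isOpen_lt (lff_cont s t i) continuous_const
    · simp only [h, if_false]
      exact isOpen_lt continuous_const (lff_cont s t i)

lemma Kcell_closed (σ : Fin n → Bool) : IsClosed (Kcell s t σ) := by
  have : Kcell s t σ = {z : ℂ | ‖z‖ ≤ 1} ∩
      ⋂ i, {z | if σ i = true then lff s t i z ≤ 0 else 0 ≤ lff s t i z} := by
    ext z; simp [Kcell, Set.mem_iInter]
  rw [this]
  refine IsClosed.inter ?_ (isClosed_iInter fun i => ?_)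
  · exact isClosed_le continuous_norm continuous_const
  · by_cases h : σ i = true
    · simp only [h, if_true]
      exact isClosed_le (lff_cont s t i) continuous_const
    · simp only [h, if_false]
      exact isClosed_le continuous_const (lff_cont s t i)

lemma combo_neg {x y a b : ℝ} (hx : x < 0) (hy : y < 0) (ha : 0 ≤ a) (hb : 0 ≤ b)
    (hab : a + b = 1) : a*x + b*y < 0 := by
  rcases eq_or_lt_of_le ha with rfl | h
  · have : b = 1 := by linarith
    subst this; simpa
  · have h1 : a*x < 0 := mul_neg_of_pos_of_neg h hx
    have h2 : b*y ≤ 0 := mul_nonpos_iff.2 (Or.inl ⟨hb, hy.le⟩)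
    linarith

lemma abs_combo_lt_one {x y : ℂ} {a b : ℝ} (hx : ‖x‖ < 1) (hy : ‖y‖ < 1)
    (ha : 0 ≤ a) (hb : 0 ≤ b) (hab : a + b = 1) : ‖a • x + b • y‖ < 1 := by
  have h1 : ‖a • x + b • y‖ ≤ a * ‖x‖ + b * ‖y‖ := by
    refine le_trans (norm_add_le _ _) ?_
    rw [Complex.real_smul, Complex.real_smul, norm_mul, norm_mul, Complex.norm_real, Real.norm_eq_abs,
      Complex.norm_real, Real.norm_eq_abs, abs_of_nonneg ha, abs_of_nonneg hb]
  have := combo_neg (x := ‖x‖ - 1) (y := ‖y‖ - 1)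
    (by linarith) (by linarith) ha hb hab
  nlinarith

lemma cell_convex (σ : Fin n → Bool) : Convex ℝ (cell s t σ) := by
  intro x hx y hy a b ha hb hab
  obtain ⟨hx1, hx2⟩ := hx
  obtain ⟨hy1, hy2⟩ := hy
  refine ⟨abs_combo_lt_one hx1 hy1 ha hb hab, fun i => ?_⟩
  have haff : lff s t i (a • x + b • y) = a * lff s t i x + b * lff s t i y := by
    have h1 : a = 1 - b := by linarith
    subst h1
    exact lf_affine' _ _ x y b
  have hxi := hx2 i
  have hyi := hy2 i
  by_cases h : σ i = true
  · rw [if_pos h] at hxi hyi ⊢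
    rw [haff]
    exact combo_neg hxi hyi ha hb hab
  · rw [if_neg h] at hxi hyi ⊢
    rw [haff]
    have := combo_neg (x := -(lff s t i x)) (y := -(lff s t i y))
      (by linarith) (by linarith) ha hb hab
    linarith

variable {s t}
variable {U : Set ℂ}
  (hs0 : ∀ i, 0 ≤ s i) (hst : ∀ i, s i < t i) (ht1 : ∀ i, t i < 1)
  (hU : U = Metric.ball (0 : ℂ) 1 \ ⋃ i, segment ℝ (ee (s i)) (ee (t i)))

include hs0 hst ht1 hU in
lemma mem_U_iff {z : ℂ} : z ∈ U ↔ ‖z‖ < 1 ∧ ∀ i, lff s t i z ≠ 0 := by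
  subst hU
  simp only [Set.mem_diff, Metric.mem_ball, Complex.dist_eq, sub_zero, Set.mem_iUnion,
    not_exists]
  constructor
  · rintro ⟨h1, h2⟩
    refine ⟨h1, fun i hlf => h2 i ?_⟩
    exact (lf_zero_iff_segment (ee_norm _) (ee_norm _)
      (ee_ne (ne_of_lt (hst i)) (by rw [abs_lt]; constructor <;> nlinarith [hs0 i, hst i, ht1 i])) h1).1 hlf
  · rintro ⟨h1, h2⟩
    refine ⟨h1, fun i hseg => h2 i ?_⟩
    exact (lf_zero_iff_segment (ee_norm _) (ee_norm _)
      (ee_ne (ne_of_lt (hst i)) (by rw [abs_lt]; constructor <;> nlinarith [hs0 i, hst i, ht1 i])) h1).2 hseg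

include hs0 hst ht1 hU in
lemma U_open : IsOpen U := by
  have : U = {z : ℂ | ‖z‖ < 1} ∩ ⋂ i, {z | lff s t i z ≠ 0} := by
    ext z
    rw [mem_U_iff hs0 hst ht1 hU]
    simp [Set.mem_iInter]
  rw [this]
  refine IsOpen.inter (isOpen_lt continuous_norm continuous_const)
    (isOpen_iInter_of_finite fun i => ?_)
  exact isOpen_compl_singleton.preimage (lff_cont s t i)

include hs0 hst ht1 hU in
lemma cell_subset_U (σ : Fin n → Bool) : cell s t σ ⊆ U := by
  intro z hz
  rw [mem_U_iff hs0 hst ht1 hU]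
  refine ⟨hz.1, fun i => ?_⟩
  have := hz.2 i
  by_cases h : σ i = true
  · simp only [h, if_true] at this; exact ne_of_lt this
  · simp only [h, if_false] at this; exact ne_of_gt this

include hs0 hst ht1 hU in
lemma mem_cell_sigOf {z : ℂ} (hz : z ∈ U) : z ∈ cell s t (sigOf s t z) := by
  rw [mem_U_iff hs0 hst ht1 hU] at hz
  refine ⟨hz.1, fun i => ?_⟩
  by_cases h : lff s t i z < 0
  · simp [sigOf, h]
  · have : 0 < lff s t i z := lt_of_le_of_ne (not_lt.1 h) (Ne.symm (hz.2 i))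
    simp [sigOf, h, this]

lemma sig_of_mem_cell {z : ℂ} {σ : Fin n → Bool} (hz : z ∈ cell s t σ) : sigOf s t z = σ := by
  funext i
  have := hz.2 i
  by_cases h : σ i = true
  · simp only [h, if_true] at this
    simp [sigOf, this, h]
  · simp only [h, if_false] at this
    simp only [Bool.not_eq_true] at h
    simp [sigOf, not_lt.2 this.le, h]

include hs0 hst ht1 hU in
lemma component_eq {z : ℂ} (hz : z ∈ U) :
    connectedComponentIn U z = cell s t (sigOf s t z) := by
  apply le_antisymm
  · -- component ⊆ cell
    set V := cell s t (sigOf s t z) with hV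
    set W := U ∩ ⋃ i, {z' | if sigOf s t z i = true then 0 < lff s t i z' else lff s t i z' < 0}
      with hW
    have hWopen : IsOpen W := by
      refine IsOpen.inter (U_open hs0 hst ht1 hU) (isOpen_iUnion fun i => ?_)
      by_cases h : sigOf s t z i = true
      · simp only [h, if_true]; exact isOpen_lt continuous_const (lff_cont s t i)
      · simp only [h, if_false]; exact isOpen_lt (lff_cont s t i) continuous_const
    have hdisj : Disjoint V W := by
      rw [Set.disjoint_left]
      rintro w hwV ⟨-, hwW⟩
      obtain ⟨i, hi⟩ := Set.mem_iUnion.1 hwW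
      have hv2 := hwV.2 i
      simp only [Set.mem_setOf_eq] at hi
      by_cases h : sigOf s t z i = true
      · rw [if_pos h] at hi hv2; linarith
      · rw [if_neg h] at hi hv2; linarith
    have hcover : U ⊆ V ∪ W := by
      intro w hw
      by_cases hwV : w ∈ V
      · exact Or.inl hwV
      · refine Or.inr ⟨hw, ?_⟩
        rw [mem_U_iff hs0 hst ht1 hU] at hw
        simp only [hV, cell, Set.mem_setOf_eq, not_and_or, not_lt, not_forall] at hwV
        rcases hwV with h | ⟨i, hi⟩
        · linarith [hw.1]
        · refine Set.mem_iUnion.2 ⟨i, ?_⟩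
          by_cases h : sigOf s t z i = true <;> simp only [h, if_true, if_false] at hi ⊢
          · exact lt_of_le_of_ne (not_lt.1 hi) (Ne.symm (hw.2 i))
          · exact lt_of_le_of_ne (not_lt.1 hi) (hw.2 i)
    have hpre : IsPreconnected (connectedComponentIn U z) :=
      (isConnected_connectedComponentIn_iff.2 hz).isPreconnected
    have hsub : connectedComponentIn U z ⊆ V ∪ W :=
      (connectedComponentIn_subset U z).trans hcover
    have hmeet : (connectedComponentIn U z ∩ V).Nonempty :=
      ⟨z, mem_connectedComponentIn hz, mem_cell_sigOf hs0 hst ht1 hU hz⟩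
    exact hpre.subset_left_of_subset_union (cell_open s t _) hWopen hdisj hsub hmeet
  · exact (cell_convex s t _).isPreconnected.subset_connectedComponentIn
      (mem_cell_sigOf hs0 hst ht1 hU hz) (cell_subset_U hs0 hst ht1 hU _)

end Cells
section Transfer
open Filter Topology

lemma lf_transfer_neg {s t : ℝ} (hs : 0 ≤ s) (hst : s < t) (ht : t < 1) {z : ℂ}
    (hz : ‖z‖ < 1) (hneg : lf (ee s) (ee t) z < 0) {p q : ℂ}
    (harc : ∀ β ∈ Set.Ioo s t, lf p q (ee β) < 0) : lf p q z < 0 := by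
  obtain ⟨β₁, h1, β₂, h2, u, hu, rfl⟩ := exists_chord hs hst ht hz hneg
  rw [lf_affine']
  exact combo_neg (a := 1-u) (b := u) (harc β₁ h1) (harc β₂ h2)
    (by linarith [hu.2]) hu.1 (by ring)

lemma lf_transfer_pos {s t : ℝ} (hs : 0 ≤ s) (hst : s < t) (ht : t < 1) {z : ℂ}
    (hz : ‖z‖ < 1) (hneg : lf (ee s) (ee t) z < 0) {p q : ℂ}
    (harc : ∀ β ∈ Set.Ioo s t, 0 < lf p q (ee β)) : 0 < lf p q z := by
  obtain ⟨β₁, h1, β₂, h2, u, hu, rfl⟩ := exists_chord hs hst ht hz hneg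
  rw [lf_affine']
  have := combo_neg (x := -(lf p q (ee β₁))) (y := -(lf p q (ee β₂))) (a := 1-u) (b := u)
    (by linarith [harc β₁ h1]) (by linarith [harc β₂ h2]) (by linarith [hu.2]) hu.1 (by ring)
  linarith

variable {n : ℕ} {s t : Fin n → ℝ} {U : Set ℂ}
  (hs0 : ∀ i, 0 ≤ s i) (hst : ∀ i, s i < t i) (ht1 : ∀ i, t i < 1)
  (hinj : Function.Injective (Sum.elim s t))
  (hunl : ∀ i j, i ≠ j →
    ((s j ∈ Set.Ioo (s i) (t i) ∧ t j ∈ Set.Ioo (s i) (t i)) ∨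
     (s j ∉ Set.Icc (s i) (t i) ∧ t j ∉ Set.Icc (s i) (t i))))
  (hU : U = Metric.ball (0 : ℂ) 1 \ ⋃ i, segment ℝ (ee (s i)) (ee (t i)))

include hs0 hst ht1 hinj hunl hU in
lemma sig_realized {z : ℂ} (hz : z ∈ U) : ∃ o, sigOf s t z = sigG s t o := by
  rw [mem_U_iff hs0 hst ht1 hU] at hz
  obtain ⟨habs, hne⟩ := hz
  have := realize_abstract hunl (fun i => lff s t i z < 0)
    (fun i j hi hij => by
      refine lf_transfer_neg (hs0 i) (hst i) (ht1 i) habs hi (fun β hβ => ?_)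
      exact lf_neg_of_mem (hs0 j) (hst j) (ht1 j)
        ⟨lt_of_le_of_lt hij.1 hβ.1, lt_of_lt_of_le hβ.2 hij.2⟩)
    (fun i j hi hj hdisj => by
      have : 0 < lff s t j z := by
        refine lf_transfer_pos (hs0 i) (hst i) (ht1 i) habs hi (fun β hβ => ?_)
        refine lf_pos_of_notmem (hs0 j) (hst j) (ht1 j)
          ⟨lt_of_le_of_lt (hs0 i) hβ.1, lt_trans hβ.2 (ht1 i)⟩ ?_
        rcases hdisj with h | h
        · exact Or.inr (lt_trans h hβ.1)
        · exact Or.inl (lt_trans hβ.2 h)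
      linarith [hj])
  rcases this with h | ⟨i0, hi0, hiff⟩
  · refine ⟨none, funext fun i => ?_⟩
    simp [sigOf, sigG, h i]
  · refine ⟨some i0, funext fun j => ?_⟩
    simp only [sigOf, sigG]
    exact decide_eq_decide.2 ((hiff j).trans (by unfold above; rfl))

variable (s t) in
lemma cell_nonempty_of_circle {σ : Fin n → Bool} {β : ℝ} (hβ : β ∈ Set.Ioo (0:ℝ) 1)
    (h : ∀ i, if σ i = true then lff s t i (ee β) < 0 else 0 < lff s t i (ee β)) :
    (cell s t σ).Nonempty := by
  have hev : ∀ i : Fin n, ∀ᶠ r : ℝ in 𝓝[<] 1,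
      (if σ i = true then lff s t i (r • ee β) < 0 else 0 < lff s t i (r • ee β)) := by
    intro i
    have hc : Filter.Tendsto (fun r : ℝ => lff s t i (r • ee β)) (𝓝[<] (1:ℝ))
        (𝓝 (lff s t i ((1:ℝ) • ee β))) :=
      (((lff_cont s t i).comp (continuous_id.smul continuous_const)).tendsto 1).mono_left
        nhdsWithin_le_nhds
    rw [one_smul] at hc
    have hi := h i
    by_cases hσ : σ i = true
    · rw [if_pos hσ] at hi
      filter_upwards [hc.eventually_lt_const hi] with r hr
      rw [if_pos hσ]; exact hr
    · rw [if_neg hσ] at hi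
      filter_upwards [hc.eventually_const_lt hi] with r hr
      rw [if_neg hσ]; exact hr
  have hall : ∀ᶠ r : ℝ in 𝓝[<] (1:ℝ), ∀ i, (if σ i = true then lff s t i (r • ee β) < 0
      else 0 < lff s t i (r • ee β)) := eventually_all.2 hev
  have hIoo : Set.Ioo (0:ℝ) 1 ∈ 𝓝[<] (1:ℝ) :=
    Ioo_mem_nhdsLT_of_mem ⟨zero_lt_one, le_refl 1⟩
  obtain ⟨r, hr1, hr2⟩ := (hall.and (Filter.eventually_of_mem hIoo (fun r hr => hr))).exists
  refine ⟨r • ee β, ?_, hr1⟩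
  rw [Complex.real_smul, norm_mul, Complex.norm_real, Real.norm_eq_abs, ee_norm, mul_one, abs_of_pos hr2.1]
  exact hr2.2

include hs0 hst ht1 hinj hunl in
variable (s t) in
lemma cell_sigG_nonempty (o : Option (Fin n)) : (cell s t (sigG s t o)).Nonempty := by
  classical
  cases o with
  | none =>
    have hne : (insert (0:ℝ) (Finset.univ.image t)).Nonempty := ⟨0, Finset.mem_insert_self _ _⟩
    set c := (insert (0:ℝ) (Finset.univ.image t)).max' hne with hc
    have hc1 : c < 1 := by
      rw [hc, Finset.max'_lt_iff]
      intro x hx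
      rcases Finset.mem_insert.1 hx with rfl | hx
      · exact zero_lt_one
      · obtain ⟨j, -, rfl⟩ := Finset.mem_image.1 hx
        exact ht1 j
    have hc0 : 0 ≤ c := Finset.le_max' _ _ (Finset.mem_insert_self _ _)
    set β := (c+1)/2 with hβ'
    have hβI : β ∈ Set.Ioo (0:ℝ) 1 := ⟨by rw [hβ']; linarith, by rw [hβ']; linarith⟩
    refine cell_nonempty_of_circle s t hβI (fun i => ?_)
    have hti : t i ≤ c := Finset.le_max' _ _ (Finset.mem_insert_of_mem
      (Finset.mem_image.2 ⟨i, Finset.mem_univ _, rfl⟩))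
    have hfalse : sigG s t none i = false := rfl
    rw [hfalse]
    simp only [Bool.false_eq_true, if_false]
    exact lf_pos_of_notmem (hs0 i) (hst i) (ht1 i) hβI (Or.inr (by rw [hβ']; linarith))
  | some i0 =>
    have hne : (insert (t i0) ((Finset.univ.image s ∪ Finset.univ.image t).filter
        (fun x => s i0 < x))).Nonempty := ⟨t i0, Finset.mem_insert_self _ _⟩
    set c := (insert (t i0) ((Finset.univ.image s ∪ Finset.univ.image t).filter
        (fun x => s i0 < x))).min' hne with hc
    have hcgt : s i0 < c := by
      rw [hc, Finset.lt_min'_iff]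
      intro x hx
      rcases Finset.mem_insert.1 hx with rfl | hx
      · exact hst i0
      · exact (Finset.mem_filter.1 hx).2
    have hcle : c ≤ t i0 := Finset.min'_le _ _ (Finset.mem_insert_self _ _)
    set β := (s i0 + c)/2 with hβ'
    have hβlt : β < c := by rw [hβ']; linarith
    have hβgt : s i0 < β := by rw [hβ']; linarith
    have hβmem : β ∈ Set.Ioo (s i0) (t i0) := ⟨hβgt, lt_of_lt_of_le hβlt hcle⟩
    have hβI : β ∈ Set.Ioo (0:ℝ) 1 :=
      ⟨lt_of_le_of_lt (hs0 i0) hβgt, lt_trans hβmem.2 (ht1 i0)⟩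
    refine cell_nonempty_of_circle s t hβI (fun j => ?_)
    by_cases hab : above s t i0 j
    · rw [if_pos ((sigG_some_true_iff s t i0 j).2 hab)]
      exact lf_neg_of_mem (hs0 j) (hst j) (ht1 j)
        ⟨lt_of_le_of_lt hab.1 hβgt, lt_of_lt_of_le hβmem.2 hab.2⟩
    · rw [if_neg (fun h => hab ((sigG_some_true_iff s t i0 j).1 h))]
      refine lf_pos_of_notmem (hs0 j) (hst j) (ht1 j) hβI ?_
      by_cases hji : j = i0
      · exact absurd (hji ▸ above_refl j) hab
      · rcases tri hunl (fun h => hji (h.symm)) with h | h | h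
        · -- desc i0 j : s i0 < s j , t j < t i0 ⇒ s j in filter set so c ≤ s j
          have hsj : c ≤ s j := by
            apply Finset.min'_le
            refine Finset.mem_insert_of_mem (Finset.mem_filter.2 ⟨?_, h.1⟩)
            exact Finset.mem_union_left _ (Finset.mem_image.2 ⟨j, Finset.mem_univ _, rfl⟩)
          exact Or.inl (lt_of_lt_of_le hβlt hsj)
        · exact absurd ⟨h.1.le, h.2.le⟩ hab
        · rcases h with h | h
          · exact Or.inr (lt_trans h hβgt)
          · exact Or.inl (lt_trans (lt_of_lt_of_le hβlt hcle) h)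

include hinj in
lemma sigG_inj : Function.Injective (sigG s t) := by
  intro o1 o2 heq
  have hval : ∀ (i0 j : Fin n), sigG s t (some i0) j = true ↔ above s t i0 j :=
    sigG_some_true_iff s t
  cases o1 with
  | none => cases o2 with
    | none => rfl
    | some j =>
      exfalso
      have := congrFun heq j
      rw [(by rfl : sigG s t none j = false)] at this
      rw [eq_comm, ← Bool.not_eq_true] at this
      exact this ((hval j j).2 (above_refl j))
  | some i => cases o2 with
    | none =>
      exfalso
      have := congrFun heq i
      rw [(by rfl : sigG s t none i = false)] at this
      rw [← Bool.not_eq_true] at this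
      exact this ((hval i i).2 (above_refl i))
    | some j =>
      have h1 : above s t i j := (hval i j).1
        ((congrFun heq j).trans ((hval j j).2 (above_refl j)))
      have h2 : above s t j i := (hval j i).1
        ((congrFun heq.symm i).trans ((hval i i).2 (above_refl i)))
      exact congrArg some (s_inj hinj (le_antisymm h2.1 h1.1))

end Transfer
section ClosureCount
open Filter Topology

variable {n : ℕ} {s t : Fin n → ℝ} {U : Set ℂ}
  (hs0 : ∀ i, 0 ≤ s i) (hst : ∀ i, s i < t i) (ht1 : ∀ i, t i < 1)
  (hinj : Function.Injective (Sum.elim s t))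
  (hunl : ∀ i j, i ≠ j →
    ((s j ∈ Set.Ioo (s i) (t i) ∧ t j ∈ Set.Ioo (s i) (t i)) ∨
     (s j ∉ Set.Icc (s i) (t i) ∧ t j ∉ Set.Icc (s i) (t i))))
  (hU : U = Metric.ball (0 : ℂ) 1 \ ⋃ i, segment ℝ (ee (s i)) (ee (t i)))

variable (s t) in
lemma closure_cell {σ : Fin n → Bool} (hne : (cell s t σ).Nonempty) :
    closure (cell s t σ) = Kcell s t σ := by
  apply le_antisymm
  · apply closure_minimal ?_ (Kcell_closed s t σ)
    intro z hz
    refine ⟨hz.1.le, fun i => ?_⟩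
    have := hz.2 i
    by_cases h : σ i = true
    · rw [if_pos h] at this ⊢; exact this.le
    · rw [if_neg h] at this ⊢; exact this.le
  · intro x hx
    obtain ⟨y, hy⟩ := hne
    have hc : Continuous (fun u : ℝ => (1-u) • x + u • y) := by fun_prop
    have htend : Filter.Tendsto (fun u : ℝ => (1-u) • x + u • y) (𝓝[>] (0:ℝ)) (𝓝 x) := by
      have := (hc.tendsto 0).mono_left (nhdsWithin_le_nhds (s := Set.Ioi (0:ℝ)))
      simpa using this
    refine mem_closure_of_tendsto htend ?_
    have hIoc : Set.Ioc (0:ℝ) 1 ∈ 𝓝[>] (0:ℝ) := Ioc_mem_nhdsGT_of_mem ⟨le_refl 0, zero_lt_one⟩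
    filter_upwards [hIoc] with u hu
    have hu0 : 0 < u := hu.1
    have hu1 : u ≤ 1 := hu.2
    constructor
    · -- norm bound
      have h1 : ‖(1-u) • x + u • y‖ ≤ (1-u) * ‖x‖ + u * ‖y‖ := by
        refine le_trans (norm_add_le _ _) ?_
        rw [Complex.real_smul, Complex.real_smul, norm_mul, norm_mul, Complex.norm_real, Real.norm_eq_abs,
          Complex.norm_real, Real.norm_eq_abs, abs_of_nonneg (by linarith), abs_of_nonneg hu0.le]
      have hax := hx.1
      have hay := hy.1
      nlinarith
    · intro i
      have haff := lf_affine' (ee (s i)) (ee (t i)) x y u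
      have hxi := hx.2 i
      have hyi := hy.2 i
      by_cases h : σ i = true
      · rw [if_pos h] at hxi hyi ⊢
        have e1 : lff s t i ((1-u) • x + u • y) = (1-u) * lff s t i x + u * lff s t i y := haff
        rw [e1]
        have h1 : (1-u) * lff s t i x ≤ 0 := mul_nonpos_iff.2 (Or.inl ⟨by linarith, hxi⟩)
        have h2 : u * lff s t i y < 0 := mul_neg_of_pos_of_neg hu0 hyi
        linarith
      · rw [if_neg h] at hxi hyi ⊢
        have e1 : lff s t i ((1-u) • x + u • y) = (1-u) * lff s t i x + u * lff s t i y := haff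
        rw [e1]
        have h1 : 0 ≤ (1-u) * lff s t i x := mul_nonneg (by linarith) hxi
        have h2 : 0 < u * lff s t i y := mul_pos hu0 hyi
        linarith

include hs0 hst ht1 hinj hunl hU in
lemma card_components :
    Nat.card {C : Set ℂ // ∃ z ∈ U, C = connectedComponentIn U z} = n + 1 := by
  have key : ∀ o : Option (Fin n), ∃ z ∈ U, cell s t (sigG s t o) = connectedComponentIn U z := by
    intro o
    obtain ⟨z, hz⟩ := cell_sigG_nonempty s t hs0 hst ht1 hinj hunl o
    have hzU : z ∈ U := cell_subset_U hs0 hst ht1 hU _ hz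
    refine ⟨z, hzU, ?_⟩
    rw [component_eq hs0 hst ht1 hU hzU, sig_of_mem_cell hz]
  set f : Option (Fin n) → {C : Set ℂ // ∃ z ∈ U, C = connectedComponentIn U z} :=
    fun o => ⟨cell s t (sigG s t o), by
      obtain ⟨z, hzU, hc⟩ := key o; exact ⟨z, hzU, hc⟩⟩ with hf
  have hbij : Function.Bijective f := by
    constructor
    · intro o1 o2 heq
      have hceq : cell s t (sigG s t o1) = cell s t (sigG s t o2) := congrArg Subtype.val heq
      obtain ⟨z, hz⟩ := cell_sigG_nonempty s t hs0 hst ht1 hinj hunl o1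
      have hz2 : z ∈ cell s t (sigG s t o2) := hceq ▸ hz
      exact sigG_inj hinj ((sig_of_mem_cell hz).symm.trans (sig_of_mem_cell hz2))
    · rintro ⟨C, z, hzU, rfl⟩
      obtain ⟨o, ho⟩ := sig_realized hs0 hst ht1 hinj hunl hU hzU
      refine ⟨o, Subtype.ext ?_⟩
      show cell s t (sigG s t o) = connectedComponentIn U z
      rw [component_eq hs0 hst ht1 hU hzU, ho]
  rw [← Nat.card_eq_of_bijective f hbij]
  simp

end ClosureCount
section MeasurePart
open Filter Topology

lemma circleExp_coe (x : ℝ) : circleExp ((x : ℝ) : 𝕊) = ee x := by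
  unfold circleExp ee
  rw [AddCircle.toCircle_apply_mk, Circle.coe_exp]
  have h : 2 * Real.pi / 1 * x = 2 * Real.pi * x := by ring
  rw [h]

lemma circleExp_cont : Continuous circleExp := by
  unfold circleExp
  exact continuous_subtype_val.comp AddCircle.continuous_toCircle

def Vset {n : ℕ} (s t : Fin n → ℝ) (σ : Fin n → Bool) : Set ℝ :=
  {β : ℝ | ee β ∈ Kcell s t σ} ∩ Set.Ioc 0 1

def Nset {n : ℕ} (s t : Fin n → ℝ) : Set ℝ := (⋃ i, ({s i, t i} : Set ℝ)) ∪ {1}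

lemma Nset_null {n : ℕ} (s t : Fin n → ℝ) : MeasureTheory.volume (Nset s t) = 0 := by
  have h : (Nset s t).Finite :=
    (Set.finite_iUnion (fun i => (Set.finite_singleton (t i)).insert (s i))).union
      (Set.finite_singleton 1)
  exact h.measure_zero _

lemma Vset_meas {n : ℕ} (s t : Fin n → ℝ) (σ : Fin n → Bool) : MeasurableSet (Vset s t σ) :=
  ((Kcell_closed s t σ).measurableSet.preimage ee_cont.measurable).inter measurableSet_Ioc

lemma vol_bridge {n : ℕ} (s t : Fin n → ℝ) (σ : Fin n → Bool) :
    MeasureTheory.volume {α : 𝕊 | circleExp α ∈ Kcell s t σ} =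
      MeasureTheory.volume (Vset s t σ) := by
  haveI : Fact ((0:ℝ) < 1) := ⟨zero_lt_one⟩
  have hmeas : MeasurableSet {α : 𝕊 | circleExp α ∈ Kcell s t σ} :=
    (Kcell_closed s t σ).measurableSet.preimage circleExp_cont.measurable
  rw [AddCircle.add_projection_respects_measure (T := 1) 0 hmeas]
  congr 1
  rw [zero_add]
  ext β
  simp only [Set.mem_inter_iff, Set.mem_preimage, Set.mem_setOf_eq, Vset]
  constructor
  · rintro ⟨h1, h2⟩
    refine ⟨?_, h2⟩
    rwa [show (QuotientAddGroup.mk β : 𝕊) = ((β : ℝ) : 𝕊) from rfl, circleExp_coe] at h1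
  · rintro ⟨h1, h2⟩
    refine ⟨?_, h2⟩
    rwa [show (QuotientAddGroup.mk β : 𝕊) = ((β : ℝ) : 𝕊) from rfl, circleExp_coe]

section Char
variable {n : ℕ} {s t : Fin n → ℝ}
  (hs0 : ∀ i, 0 ≤ s i) (hst : ∀ i, s i < t i) (ht1 : ∀ i, t i < 1)

include hs0 hst ht1 in
lemma mem_Kcell_iff {β : ℝ} (hβ : β ∈ Set.Ioc (0:ℝ) 1) (hN : β ∉ Nset s t) (σ : Fin n → Bool) :
    ee β ∈ Kcell s t σ ↔
      ∀ j, if σ j = true then β ∈ Set.Ioo (s j) (t j) else β ∉ Set.Ioo (s j) (t j) := by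
  simp only [Nset, Set.mem_union, Set.mem_iUnion, Set.mem_insert_iff,
    Set.mem_singleton_iff, not_or, not_exists] at hN
  have hβ1 : β ≠ 1 := hN.2
  have hβI : β ∈ Set.Ioo (0:ℝ) 1 := ⟨hβ.1, lt_of_le_of_ne hβ.2 hβ1⟩
  have hnej : ∀ j, β ≠ s j ∧ β ≠ t j := fun j => hN.1 j
  constructor
  · rintro ⟨-, h⟩ j
    have hj := h j
    by_cases hσ : σ j = true
    · rw [if_pos hσ] at hj ⊢
      have hne0 : lff s t j (ee β) ≠ 0 :=
        lf_ne_of_ne (hs0 j) (hst j) (ht1 j) hβI (hnej j).1 (hnej j).2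
      exact (lf_neg_iff (hs0 j) (hst j) (ht1 j) hβI).1 (lt_of_le_of_ne hj hne0)
    · rw [if_neg hσ] at hj ⊢
      intro hmem
      have := lf_neg_of_mem (hs0 j) (hst j) (ht1 j) hmem
      have h2 : lff s t j (ee β) < 0 := this
      linarith
  · intro h
    refine ⟨le_of_eq (ee_norm β), fun j => ?_⟩
    have hj := h j
    by_cases hσ : σ j = true
    · rw [if_pos hσ] at hj ⊢
      exact le_of_lt (lf_neg_of_mem (hs0 j) (hst j) (ht1 j) hj)
    · rw [if_neg hσ] at hj ⊢
      refine le_of_lt (lf_pos_of_notmem (hs0 j) (hst j) (ht1 j) hβI ?_)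
      rw [Set.mem_Ioo, not_and_or, not_lt, not_lt] at hj
      rcases hj with hj | hj
      · exact Or.inl (lt_of_le_of_ne hj (hnej j).1)
      · exact Or.inr (lt_of_le_of_ne hj (hnej j).2.symm)
end Char

end MeasurePart
section VolV
open Filter Topology MeasureTheory

variable {n : ℕ} {s t : Fin n → ℝ}
  (hs0 : ∀ i, 0 ≤ s i) (hst : ∀ i, s i < t i) (ht1 : ∀ i, t i < 1)
  (hinj : Function.Injective (Sum.elim s t))
  (hunl : ∀ i j, i ≠ j →
    ((s j ∈ Set.Ioo (s i) (t i) ∧ t j ∈ Set.Ioo (s i) (t i)) ∨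
     (s j ∉ Set.Icc (s i) (t i) ∧ t j ∉ Set.Icc (s i) (t i))))
  (d : ℕ) (hint : ∀ i, ∃ k : ℤ, (d:ℝ) * (t i - s i) = (k:ℝ)) (hd0 : 0 < d)

include hs0 hst ht1 hinj hunl hint hd0 in
lemma vol_V_some (i0 : Fin n) :
    ∃ k : ℕ, 1 ≤ k ∧ volume (Vset s t (sigG s t (some i0))) = (k : ENNReal) / d := by
  classical
  set M : Finset (Fin n) := Finset.univ.filter (fun k => k ∈ Mset s t (desc s t i0)) with hM
  have hMdesc : ∀ j ∈ M, desc s t i0 j := by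
    intro j hj
    exact ((Finset.mem_filter.1 hj).2).1
  set B : Set ℝ := ⋃ j ∈ M, Set.Ioo (s j) (t j) with hB
  set W : Set ℝ := Set.Ioo (s i0) (t i0) \ B with hW
  have hsigtrue : sigG s t (some i0) i0 = true := by
    simp [sigG]
  have hsig_iff : ∀ j, sigG s t (some i0) j = true ↔ above s t i0 j := sigG_some_true_iff s t i0
  -- V ⊆ W ∪ N
  have hVW : Vset s t (sigG s t (some i0)) ⊆ W ∪ Nset s t := by
    rintro β ⟨h1, h2⟩
    by_cases hN : β ∈ Nset s t
    · exact Or.inr hN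
    left
    have hchar := (mem_Kcell_iff hs0 hst ht1 h2 hN _).1 h1
    constructor
    · have := hchar i0
      rwa [if_pos hsigtrue] at this
    · intro hmem
      obtain ⟨j, hjM, hjmem⟩ := Set.mem_iUnion₂.1 hmem
      have hdesc := hMdesc j hjM
      have hfalse : sigG s t (some i0) j ≠ true :=
        fun h => (not_above_of_desc hinj hdesc) ((hsig_iff j).1 h)
      have := hchar j
      rw [if_neg hfalse] at this
      exact this hjmem
  -- W ⊆ V ∪ N
  have hWV : W ⊆ Vset s t (sigG s t (some i0)) ∪ Nset s t := by
    rintro β ⟨hβmem, hβB⟩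
    by_cases hN : β ∈ Nset s t
    · exact Or.inr hN
    left
    have hβIoc : β ∈ Set.Ioc (0:ℝ) 1 :=
      ⟨lt_of_le_of_lt (hs0 i0) hβmem.1, le_of_lt (lt_trans hβmem.2 (ht1 i0))⟩
    refine ⟨(mem_Kcell_iff hs0 hst ht1 hβIoc hN _).2 (fun j => ?_), hβIoc⟩
    by_cases hab : above s t i0 j
    · rw [if_pos ((hsig_iff j).2 hab)]
      exact ⟨lt_of_le_of_lt hab.1 hβmem.1, lt_of_lt_of_le hβmem.2 hab.2⟩
    · rw [if_neg (fun h => hab ((hsig_iff j).1 h))]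
      intro hmem
      by_cases hji : j = i0
      · subst hji; exact hab (above_refl j)
      · rcases tri hunl (fun h => hji h.symm) with h | h | h
        · obtain ⟨k, hkM, hks, hkt⟩ := exists_maximal (desc s t i0) h
          refine hβB (Set.mem_iUnion₂.2 ⟨k, ?_, ?_⟩)
          · rw [hM]; simp only [Finset.mem_filter, Finset.mem_univ, true_and]; exact hkM
          · exact ⟨lt_of_le_of_lt hks hmem.1, lt_of_lt_of_le hmem.2 hkt⟩
        · exact hab ⟨h.1.le, h.2.le⟩
        · rcases h with h | h
          · linarith [hβmem.1, hmem.2]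
          · linarith [hβmem.2, hmem.1]
  -- volumes agree
  have hvol_eq : volume (Vset s t (sigG s t (some i0))) = volume W := by
    apply le_antisymm
    · calc volume (Vset s t (sigG s t (some i0))) ≤ volume (W ∪ Nset s t) := measure_mono hVW
        _ ≤ volume W + volume (Nset s t) := measure_union_le _ _
        _ = volume W := by rw [Nset_null, add_zero]
    · calc volume W ≤ volume (Vset s t (sigG s t (some i0)) ∪ Nset s t) := measure_mono hWV
        _ ≤ volume (Vset s t (sigG s t (some i0))) + volume (Nset s t) := measure_union_le _ _
        _ = volume (Vset s t (sigG s t (some i0))) := by rw [Nset_null, add_zero]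
  -- compute volume W
  have hBsub : B ⊆ Set.Ioo (s i0) (t i0) := by
    rintro x hx
    obtain ⟨j, hjM, hj⟩ := Set.mem_iUnion₂.1 hx
    have hdesc := hMdesc j hjM
    exact ⟨lt_trans hdesc.1 hj.1, lt_trans hj.2 hdesc.2⟩
  have hdisj : (M : Set (Fin n)).PairwiseDisjoint (fun j => Set.Ioo (s j) (t j)) := by
    intro j hj k hk hjk
    have hjMs : j ∈ Mset s t (desc s t i0) := (Finset.mem_filter.1 hj).2
    have hkMs : k ∈ Mset s t (desc s t i0) := (Finset.mem_filter.1 hk).2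
    refine Set.disjoint_left.2 (fun x hxj hxk => ?_)
    rcases maximal_disjoint' hunl hjMs hkMs hjk with h | h
    · linarith [hxj.1, hxk.2]
    · linarith [hxj.2, hxk.1]
  have hvolB : volume B = ∑ j ∈ M, ENNReal.ofReal (t j - s j) := by
    rw [hB, measure_biUnion_finset hdisj (fun j _ => measurableSet_Ioo)]
    exact Finset.sum_congr rfl (fun j _ => Real.volume_Ioo)
  have hBne : volume B ≠ ⊤ := by
    rw [hvolB]
    exact (ENNReal.sum_lt_top.2 (fun j _ => ENNReal.ofReal_lt_top)).ne
  have hvolW : volume W =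
      ENNReal.ofReal ((t i0 - s i0) - ∑ j ∈ M, (t j - s j)) := by
    rw [hW, measure_diff hBsub (M.measurableSet_biUnion (fun j _ => measurableSet_Ioo)).nullMeasurableSet hBne,
      Real.volume_Ioo, hvolB,
      ← ENNReal.ofReal_sum_of_nonneg (fun j _ => sub_nonneg.2 (hst j).le),
      ← ENNReal.ofReal_sub _ (Finset.sum_nonneg (fun j _ => sub_nonneg.2 (hst j).le))]
  set r : ℝ := (t i0 - s i0) - ∑ j ∈ M, (t j - s j) with hr
  -- positivity via a gap just right of s i0
  have hrpos : 0 < r := by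
    have hne : (insert (t i0) (M.image s)).Nonempty := ⟨t i0, Finset.mem_insert_self _ _⟩
    set c := (insert (t i0) (M.image s)).min' hne with hc
    have hcgt : s i0 < c := by
      rw [hc, Finset.lt_min'_iff]
      intro x hx
      rcases Finset.mem_insert.1 hx with rfl | hx
      · exact hst i0
      · obtain ⟨j, hjM, rfl⟩ := Finset.mem_image.1 hx
        exact (hMdesc j hjM).1
    have hcle : c ≤ t i0 := Finset.min'_le _ _ (Finset.mem_insert_self _ _)
    have hsub : Set.Ioo (s i0) c ⊆ W := by
      intro x hx
      refine ⟨⟨hx.1, lt_of_lt_of_le hx.2 hcle⟩, fun hxB => ?_⟩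
      obtain ⟨j, hjM, hj⟩ := Set.mem_iUnion₂.1 hxB
      have : c ≤ s j := Finset.min'_le _ _ (Finset.mem_insert_of_mem
        (Finset.mem_image.2 ⟨j, hjM, rfl⟩))
      linarith [hj.1, hx.2]
    have h1 : ENNReal.ofReal (c - s i0) ≤ ENNReal.ofReal r := by
      rw [← Real.volume_Ioo, ← hvolW]
      exact measure_mono hsub
    have h2 : (0:ENNReal) < ENNReal.ofReal (c - s i0) := ENNReal.ofReal_pos.2 (by linarith)
    exact ENNReal.ofReal_pos.1 (lt_of_lt_of_le h2 h1)
  -- integrality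
  choose K hK using hint
  set m : ℤ := K i0 - ∑ j ∈ M, K j with hm
  have hmr : (d:ℝ) * r = (m:ℝ) := by
    rw [hr, mul_sub, Finset.mul_sum, hK i0, hm]
    push_cast
    congr 1
    exact Finset.sum_congr rfl (fun j _ => hK j)
  have hmpos : 0 < m := by
    have : (0:ℝ) < (m:ℝ) := by
      rw [← hmr]
      exact mul_pos (by exact_mod_cast hd0) hrpos
    exact_mod_cast this
  refine ⟨m.toNat, by omega, ?_⟩
  rw [hvol_eq, hvolW]
  have hreq : r = ((m.toNat : ℕ) : ℝ) / d := by
    have h1 : ((m.toNat : ℕ) : ℝ) = (m:ℝ) := by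
      exact_mod_cast congrArg (Int.cast : ℤ → ℝ) (Int.toNat_of_nonneg hmpos.le)
    rw [h1, ← hmr]
    field_simp
  rw [hreq, ENNReal.ofReal_div_of_pos (by exact_mod_cast hd0), ENNReal.ofReal_natCast,
    ENNReal.ofReal_natCast]

end VolV
section VolVnone
open Filter Topology MeasureTheory

variable {n : ℕ} {s t : Fin n → ℝ}
  (hs0 : ∀ i, 0 ≤ s i) (hst : ∀ i, s i < t i) (ht1 : ∀ i, t i < 1)
  (hinj : Function.Injective (Sum.elim s t))
  (hunl : ∀ i j, i ≠ j →
    ((s j ∈ Set.Ioo (s i) (t i) ∧ t j ∈ Set.Ioo (s i) (t i)) ∨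
     (s j ∉ Set.Icc (s i) (t i) ∧ t j ∉ Set.Icc (s i) (t i))))
  (d : ℕ) (hint : ∀ i, ∃ k : ℤ, (d:ℝ) * (t i - s i) = (k:ℝ)) (hd0 : 0 < d)

include hs0 hst ht1 hinj hunl hint hd0 in
lemma vol_V_none :
    ∃ k : ℕ, 1 ≤ k ∧ volume (Vset s t (sigG s t none)) = (k : ENNReal) / d := by
  classical
  set M : Finset (Fin n) := Finset.univ.filter (fun k => k ∈ Mset s t (fun _ => True)) with hM
  set B : Set ℝ := ⋃ j ∈ M, Set.Ioo (s j) (t j) with hB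
  set W : Set ℝ := Set.Ioc (0:ℝ) 1 \ B with hW
  have hsigfalse : ∀ j, sigG s t none j = false := fun _ => rfl
  -- V ⊆ W ∪ N
  have hVW : Vset s t (sigG s t none) ⊆ W ∪ Nset s t := by
    rintro β ⟨h1, h2⟩
    by_cases hN : β ∈ Nset s t
    · exact Or.inr hN
    left
    have hchar := (mem_Kcell_iff hs0 hst ht1 h2 hN _).1 h1
    refine ⟨h2, fun hmem => ?_⟩
    obtain ⟨j, hjM, hjmem⟩ := Set.mem_iUnion₂.1 hmem
    have := hchar j
    rw [if_neg (by rw [hsigfalse j]; exact Bool.false_ne_true)] at this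
    exact this hjmem
  -- W ⊆ V ∪ N
  have hWV : W ⊆ Vset s t (sigG s t none) ∪ Nset s t := by
    rintro β ⟨hβIoc, hβB⟩
    by_cases hN : β ∈ Nset s t
    · exact Or.inr hN
    left
    refine ⟨(mem_Kcell_iff hs0 hst ht1 hβIoc hN _).2 (fun j => ?_), hβIoc⟩
    rw [if_neg (by rw [hsigfalse j]; exact Bool.false_ne_true)]
    intro hmem
    obtain ⟨k, hkM, hks, hkt⟩ := exists_maximal (s := s) (t := t) (fun _ => True) (j := j) trivial
    refine hβB (Set.mem_iUnion₂.2 ⟨k, ?_, ?_⟩)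
    · rw [hM]; simp only [Finset.mem_filter, Finset.mem_univ, true_and]; exact hkM
    · exact ⟨lt_of_le_of_lt hks hmem.1, lt_of_lt_of_le hmem.2 hkt⟩
  -- volumes agree
  have hvol_eq : volume (Vset s t (sigG s t none)) = volume W := by
    apply le_antisymm
    · calc volume (Vset s t (sigG s t none)) ≤ volume (W ∪ Nset s t) := measure_mono hVW
        _ ≤ volume W + volume (Nset s t) := measure_union_le _ _
        _ = volume W := by rw [Nset_null, add_zero]
    · calc volume W ≤ volume (Vset s t (sigG s t none) ∪ Nset s t) := measure_mono hWV
        _ ≤ volume (Vset s t (sigG s t none)) + volume (Nset s t) := measure_union_le _ _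
        _ = volume (Vset s t (sigG s t none)) := by rw [Nset_null, add_zero]
  -- compute volume W
  have hBsub : B ⊆ Set.Ioc (0:ℝ) 1 := by
    rintro x hx
    obtain ⟨j, hjM, hj⟩ := Set.mem_iUnion₂.1 hx
    exact ⟨lt_of_le_of_lt (hs0 j) hj.1, le_of_lt (lt_trans hj.2 (ht1 j))⟩
  have hdisj : (M : Set (Fin n)).PairwiseDisjoint (fun j => Set.Ioo (s j) (t j)) := by
    intro j hj k hk hjk
    have hjMs : j ∈ Mset s t (fun _ => True) := (Finset.mem_filter.1 hj).2
    have hkMs : k ∈ Mset s t (fun _ => True) := (Finset.mem_filter.1 hk).2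
    refine Set.disjoint_left.2 (fun x hxj hxk => ?_)
    rcases maximal_disjoint' hunl hjMs hkMs hjk with h | h
    · linarith [hxj.1, hxk.2]
    · linarith [hxj.2, hxk.1]
  have hvolB : volume B = ∑ j ∈ M, ENNReal.ofReal (t j - s j) := by
    rw [hB, measure_biUnion_finset hdisj (fun j _ => measurableSet_Ioo)]
    exact Finset.sum_congr rfl (fun j _ => Real.volume_Ioo)
  have hBne : volume B ≠ ⊤ := by
    rw [hvolB]
    exact (ENNReal.sum_lt_top.2 (fun j _ => ENNReal.ofReal_lt_top)).ne
  have hvolW : volume W = ENNReal.ofReal ((1:ℝ) - ∑ j ∈ M, (t j - s j)) := by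
    rw [hW, measure_diff hBsub (M.measurableSet_biUnion (fun j _ => measurableSet_Ioo)).nullMeasurableSet hBne,
      Real.volume_Ioc, hvolB,
      ← ENNReal.ofReal_sum_of_nonneg (fun j _ => sub_nonneg.2 (hst j).le),
      ← ENNReal.ofReal_sub _ (Finset.sum_nonneg (fun j _ => sub_nonneg.2 (hst j).le))]
    norm_num
  set r : ℝ := (1:ℝ) - ∑ j ∈ M, (t j - s j) with hr
  -- positivity via a gap just below 1
  have hrpos : 0 < r := by
    have hne : (insert (0:ℝ) (M.image t)).Nonempty := ⟨0, Finset.mem_insert_self _ _⟩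
    set c := (insert (0:ℝ) (M.image t)).max' hne with hc
    have hclt : c < 1 := by
      rw [hc, Finset.max'_lt_iff]
      intro x hx
      rcases Finset.mem_insert.1 hx with rfl | hx
      · exact zero_lt_one
      · obtain ⟨j, hjM, rfl⟩ := Finset.mem_image.1 hx
        exact ht1 j
    have hc0 : 0 ≤ c := Finset.le_max' _ _ (Finset.mem_insert_self _ _)
    have hsub : Set.Ioo c 1 ⊆ W := by
      intro x hx
      refine ⟨⟨lt_of_le_of_lt hc0 hx.1, hx.2.le⟩, fun hxB => ?_⟩
      obtain ⟨j, hjM, hj⟩ := Set.mem_iUnion₂.1 hxB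
      have : t j ≤ c := Finset.le_max' _ _ (Finset.mem_insert_of_mem
        (Finset.mem_image.2 ⟨j, hjM, rfl⟩))
      linarith [hj.2, hx.1]
    have h1 : ENNReal.ofReal (1 - c) ≤ ENNReal.ofReal r := by
      rw [← Real.volume_Ioo, ← hvolW]
      exact measure_mono hsub
    have h2 : (0:ENNReal) < ENNReal.ofReal (1 - c) := ENNReal.ofReal_pos.2 (by linarith)
    exact ENNReal.ofReal_pos.1 (lt_of_lt_of_le h2 h1)
  -- integrality
  choose K hK using hint
  set m : ℤ := (d:ℤ) - ∑ j ∈ M, K j with hm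
  have hmr : (d:ℝ) * r = (m:ℝ) := by
    rw [hr, mul_sub, Finset.mul_sum, hm]
    push_cast
    rw [mul_one]
    congr 1
    exact Finset.sum_congr rfl (fun j _ => hK j)
  have hmpos : 0 < m := by
    have : (0:ℝ) < (m:ℝ) := by
      rw [← hmr]
      exact mul_pos (by exact_mod_cast hd0) hrpos
    exact_mod_cast this
  refine ⟨m.toNat, by omega, ?_⟩
  rw [hvol_eq, hvolW]
  have hreq : r = ((m.toNat : ℕ) : ℝ) / d := by
    have h1 : ((m.toNat : ℕ) : ℝ) = (m:ℝ) := by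
      exact_mod_cast congrArg (Int.cast : ℤ → ℝ) (Int.toNat_of_nonneg hmpos.le)
    rw [h1, ← hmr]
    field_simp
  rw [hreq, ENNReal.ofReal_div_of_pos (by exact_mod_cast hd0), ENNReal.ofReal_natCast,
    ENNReal.ofReal_natCast]

end VolVnone
section Sum
open Filter Topology MeasureTheory

variable {n : ℕ} {s t : Fin n → ℝ}
  (hs0 : ∀ i, 0 ≤ s i) (hst : ∀ i, s i < t i) (ht1 : ∀ i, t i < 1)
  (hinj : Function.Injective (Sum.elim s t))
  (hunl : ∀ i j, i ≠ j →
    ((s j ∈ Set.Ioo (s i) (t i) ∧ t j ∈ Set.Ioo (s i) (t i)) ∨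
     (s j ∉ Set.Icc (s i) (t i) ∧ t j ∉ Set.Icc (s i) (t i))))

include hs0 hst ht1 hinj hunl in
lemma vol_sum : ∑ o : Option (Fin n), volume (Vset s t (sigG s t o)) = 1 := by
  classical
  have hdisj : Pairwise (Function.onFun (MeasureTheory.AEDisjoint volume)
      (fun o => Vset s t (sigG s t o))) := by
    intro o1 o2 hne
    refine measure_mono_null ?_ (Nset_null s t)
    rintro β ⟨⟨hK1, hIoc⟩, ⟨hK2, -⟩⟩
    by_contra hN
    have e1 := (mem_Kcell_iff hs0 hst ht1 hIoc hN _).1 hK1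
    have e2 := (mem_Kcell_iff hs0 hst ht1 hIoc hN _).1 hK2
    have hσ : sigG s t o1 = sigG s t o2 := by
      funext j
      have h1 := e1 j
      have h2 := e2 j
      by_cases hb1 : sigG s t o1 j = true
      · rw [if_pos hb1] at h1
        by_cases hb2 : sigG s t o2 j = true
        · rw [hb1, hb2]
        · rw [if_neg hb2] at h2
          exact absurd h1 h2
      · rw [if_neg hb1] at h1
        by_cases hb2 : sigG s t o2 j = true
        · rw [if_pos hb2] at h2
          exact absurd h2 h1
        · rw [Bool.not_eq_true] at hb1 hb2
          rw [hb1, hb2]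
    exact hne (sigG_inj hinj hσ)
  have hcover : Set.Ioc (0:ℝ) 1 \ Nset s t ⊆ ⋃ o, Vset s t (sigG s t o) := by
    rintro β ⟨hβIoc, hβN⟩
    have hreal := realize_abstract hunl (fun j => β ∈ Set.Ioo (s j) (t j))
      (fun i j hi hij => ⟨lt_of_le_of_lt hij.1 hi.1, lt_of_lt_of_le hi.2 hij.2⟩)
      (fun i j hi hj hd => by
        rcases hd with h | h
        · linarith [hi.1, hj.2]
        · linarith [hi.2, hj.1])
    rcases hreal with h | ⟨i0, hi0, hiff⟩
    · refine Set.mem_iUnion.2 ⟨none, (mem_Kcell_iff hs0 hst ht1 hβIoc hβN _).2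
        (fun j => ?_), hβIoc⟩
      rw [if_neg (by exact Bool.false_ne_true : ¬ sigG s t none j = true)]
      exact h j
    · refine Set.mem_iUnion.2 ⟨some i0, (mem_Kcell_iff hs0 hst ht1 hβIoc hβN _).2
        (fun j => ?_), hβIoc⟩
      by_cases hab : above s t i0 j
      · rw [if_pos ((sigG_some_true_iff s t i0 j).2 hab)]
        exact (hiff j).2 hab
      · rw [if_neg (fun h => hab ((sigG_some_true_iff s t i0 j).1 h))]
        exact fun hmem => hab ((hiff j).1 hmem)
  have hUnion : volume (⋃ o, Vset s t (sigG s t o)) = ∑' o, volume (Vset s t (sigG s t o)) :=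
    measure_iUnion₀ hdisj (fun o => (Vset_meas s t _).nullMeasurableSet)
  have hge : 1 ≤ volume (⋃ o, Vset s t (sigG s t o)) := by
    have h1 : volume (Set.Ioc (0:ℝ) 1 \ Nset s t) = 1 := by
      rw [measure_diff_null (Nset_null s t), Real.volume_Ioc]
      norm_num
    calc (1:ENNReal) = volume (Set.Ioc (0:ℝ) 1 \ Nset s t) := h1.symm
      _ ≤ volume (⋃ o, Vset s t (sigG s t o)) := measure_mono hcover
  have hle : volume (⋃ o, Vset s t (sigG s t o)) ≤ 1 := by
    have h1 : (⋃ o, Vset s t (sigG s t o)) ⊆ Set.Ioc (0:ℝ) 1 :=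
      Set.iUnion_subset (fun o => Set.inter_subset_right)
    calc volume (⋃ o, Vset s t (sigG s t o)) ≤ volume (Set.Ioc (0:ℝ) 1) := measure_mono h1
      _ = 1 := by rw [Real.volume_Ioc]; norm_num
  rw [← tsum_fintype (L := SummationFilter.unconditional _), ← hUnion]
  exact le_antisymm hle hge

variable (d : ℕ) (hint : ∀ i, ∃ k : ℤ, (d:ℝ) * (t i - s i) = (k:ℝ)) (hdn : d = n + 1)

include hs0 hst ht1 hinj hunl hint hdn in
lemma vol_V_eq (o : Option (Fin n)) :
    volume (Vset s t (sigG s t o)) = 1 / (d : ENNReal) := by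
  classical
  have hd0 : 0 < d := by omega
  have hex : ∀ o' : Option (Fin n), ∃ k : ℕ, 1 ≤ k ∧
      volume (Vset s t (sigG s t o')) = (k : ENNReal) / d := by
    intro o'
    cases o' with
    | none => exact vol_V_none hs0 hst ht1 hinj hunl d hint hd0
    | some i0 => exact vol_V_some hs0 hst ht1 hinj hunl d hint hd0 i0
  choose k hk1 hk2 using hex
  have hdne : (d : ENNReal) ≠ 0 := by
    simp only [ne_eq, Nat.cast_eq_zero]
    omega
  have hdnetop : (d : ENNReal) ≠ ⊤ := ENNReal.natCast_ne_top d
  have hsum : ∑ o' : Option (Fin n), ((k o' : ENNReal) / d) = 1 := by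
    rw [← vol_sum hs0 hst ht1 hinj hunl]
    exact Finset.sum_congr rfl (fun o' _ => (hk2 o').symm)
  have hsum2 : (∑ o' : Option (Fin n), (k o' : ENNReal)) = d := by
    have h1 : ∑ o' : Option (Fin n), ((k o' : ENNReal) / d) =
        (∑ o' : Option (Fin n), (k o' : ENNReal)) / d := by
      simp only [div_eq_mul_inv, ← Finset.sum_mul]
    rw [h1] at hsum
    have := congrArg (· * (d:ENNReal)) hsum
    simpa [ENNReal.div_mul_cancel hdne hdnetop] using this
  have hsum3 : (∑ o' : Option (Fin n), k o') = d := by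
    have : ((∑ o' : Option (Fin n), k o' : ℕ) : ENNReal) = ((d:ℕ) : ENNReal) := by
      push_cast
      exact hsum2
    exact_mod_cast this
  have hcard : ∑ o' : Option (Fin n), (1:ℕ) = d := by
    simp [Finset.card_univ, hdn]
  have hall : ∀ o' ∈ Finset.univ, (1:ℕ) = k o' := by
    rw [← Finset.sum_eq_sum_iff_of_le (fun o' _ => hk1 o')]
    rw [hsum3, hcard]
  have hko : k o = 1 := ((hall o (Finset.mem_univ o))).symm
  rw [hk2 o, hko, Nat.cast_one]

end Sum
/-- For a generic degree-`d` primitive major, the open unit disk minus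
the `d - 1` leaves (straight chords joining `e^{2πi sᵢ}` to `e^{2πi tᵢ}`) has exactly
`d` connected components, and for each component `C` the Haar (Lebesgue) measure on
`ℝ/ℤ` of the set of angles `α` with `e^{2πiα} ∈ closure C` equals `1/d`. -/
theorem disk_minus_major_components (d : ℕ) (hd : 2 ≤ d)
    (s t : Fin (d - 1) → ℝ) (hmajor : IsGenericMajor d s t)
    (U : Set ℂ)
    (hU : U = Metric.ball (0 : ℂ) 1 \
        ⋃ i, segment ℝ (circleExp ((s i : ℝ) : 𝕊)) (circleExp ((t i : ℝ) : 𝕊))) :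
    Nat.card {C : Set ℂ // ∃ z ∈ U, C = connectedComponentIn U z} = d ∧
    ∀ z ∈ U,
      volume {α : 𝕊 | circleExp α ∈ closure (connectedComponentIn U z)} =
        1 / (d : ENNReal) := by
  obtain ⟨hb, hinj, hint, hunl⟩ := hmajor
  have hs0 : ∀ i, 0 ≤ s i := fun i => (hb i).1
  have hst : ∀ i, s i < t i := fun i => (hb i).2.1
  have ht1 : ∀ i, t i < 1 := fun i => (hb i).2.2
  have hdn : d = (d - 1) + 1 := by omega
  simp only [circleExp_coe] at hU
  constructor
  · rw [card_components hs0 hst ht1 hinj hunl hU]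
    omega
  · intro z hz
    rw [component_eq hs0 hst ht1 hU hz]
    obtain ⟨o, ho⟩ := sig_realized hs0 hst ht1 hinj hunl hU hz
    rw [ho, closure_cell s t (cell_sigG_nonempty s t hs0 hst ht1 hinj hunl o),
      vol_bridge s t (sigG s t o)]
    exact vol_V_eq hs0 hst ht1 hinj hunl d hint hdn o
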